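/- Let P, Q, R be compact metric spaces, φ : P × Q × R → ℝ continuous, and let P_n, Q_n, R_n be sequences of nonempty subsets dense in P, Q, R respectively. Then min_{p∈P} max_{q∈Q} min_{r∈R} φ(p,q,r) = lim_{n→∞} inf_{p∈P_n} sup_{q∈Q_n} inf_{r∈R_n} φ(p,q,r). -/

import Mathlib

section aux

variable {X Y : Type*}

lemma dense_ciInf_eq [TopologicalSpace X] [Nonempty X] {f : X → ℝ} (hf : Continuous f)
    {S : Set X} (hSd : Dense S) (hSne : S.Nonempty) {m : ℝ} (hm : ∀ x, m ≤ f x) :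
    (⨅ x : S, f x) = ⨅ x, f x := by
  haveI : Nonempty S := hSne.to_subtype
  have bdd : BddBelow (Set.range fun x : S => f x) :=
    ⟨m, by rintro _ ⟨x, rfl⟩; exact hm x⟩
  have bdd' : BddBelow (Set.range f) := ⟨m, by rintro _ ⟨x, rfl⟩; exact hm x⟩
  apply le_antisymm
  · refine le_ciInf fun x => ?_
    have hcl : IsClosed {y | (⨅ x : S, f x) ≤ f y} := isClosed_le continuous_const hf
    have hsub : S ⊆ {y | (⨅ x : S, f x) ≤ f y} := fun s hs => ciInf_le bdd ⟨s, hs⟩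
    have h2 := hcl.closure_subset_iff.2 hsub
    rw [hSd.closure_eq] at h2
    exact h2 (Set.mem_univ x)
  · exact le_ciInf fun x => ciInf_le bdd' (x : X)

lemma dense_ciSup_eq [TopologicalSpace X] [Nonempty X] {f : X → ℝ} (hf : Continuous f)
    {S : Set X} (hSd : Dense S) (hSne : S.Nonempty) {M : ℝ} (hM : ∀ x, f x ≤ M) :
    (⨆ x : S, f x) = ⨆ x, f x := by
  haveI : Nonempty S := hSne.to_subtype
  have bdd : BddAbove (Set.range fun x : S => f x) :=
    ⟨M, by rintro _ ⟨x, rfl⟩; exact hM x⟩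
  have bdd' : BddAbove (Set.range f) := ⟨M, by rintro _ ⟨x, rfl⟩; exact hM x⟩
  apply le_antisymm
  · exact ciSup_le fun x => le_ciSup bdd' (x : X)
  · refine ciSup_le fun x => ?_
    have hcl : IsClosed {y | f y ≤ ⨆ x : S, f x} := isClosed_le hf continuous_const
    have hsub : S ⊆ {y | f y ≤ ⨆ x : S, f x} := fun s hs => le_ciSup bdd ⟨s, hs⟩
    have h2 := hcl.closure_subset_iff.2 hsub
    rw [hSd.closure_eq] at h2
    exact h2 (Set.mem_univ x)

lemma continuous_ciInf_compact [MetricSpace X] [MetricSpace Y]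
    [CompactSpace X] [CompactSpace Y] [Nonempty X] [Nonempty Y]
    {f : X → Y → ℝ} (hf : Continuous fun p : X × Y => f p.1 p.2)
    {m : ℝ} (hm : ∀ x y, m ≤ f x y) :
    Continuous fun x => ⨅ y, f x y := by
  have huc : UniformContinuous fun p : X × Y => f p.1 p.2 :=
    CompactSpace.uniformContinuous_of_continuous hf
  rw [Metric.uniformContinuous_iff] at huc
  have bdd : ∀ x : X, BddBelow (Set.range fun y => f x y) := fun x =>
    ⟨m, by rintro _ ⟨y, rfl⟩; exact hm x y⟩
  rw [Metric.continuous_iff]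
  intro x ε hε
  obtain ⟨δ, hδ, hδ'⟩ := huc (ε / 2) (by linarith)
  have key : ∀ a b : X, dist a b < δ → (⨅ y, f a y) ≤ (⨅ y, f b y) + ε / 2 := by
    intro a b hab
    have h1 : (⨅ y, f a y) - ε / 2 ≤ ⨅ y, f b y := by
      refine le_ciInf fun y => ?_
      have hd : dist ((a, y) : X × Y) (b, y) < δ := by
        simpa [Prod.dist_eq] using hab
      have h2 := hδ' hd
      rw [Real.dist_eq, abs_sub_lt_iff] at h2
      have h3 := ciInf_le (bdd a) y
      linarith [h2.1, h2.2]
    linarith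
  refine ⟨δ, hδ, fun x' hx' => ?_⟩
  have k1 := key x x' (by rwa [dist_comm] at hx')
  have k2 := key x' x hx'
  rw [Real.dist_eq, abs_sub_lt_iff]
  constructor <;> linarith

lemma continuous_ciSup_compact [MetricSpace X] [MetricSpace Y]
    [CompactSpace X] [CompactSpace Y] [Nonempty X] [Nonempty Y]
    {f : X → Y → ℝ} (hf : Continuous fun p : X × Y => f p.1 p.2)
    {M : ℝ} (hM : ∀ x y, f x y ≤ M) :
    Continuous fun x => ⨆ y, f x y := by
  have h1 : Continuous fun x => ⨅ y, -f x y :=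
    continuous_ciInf_compact (f := fun x y => -f x y) (hf.neg) (m := -M)
      (fun x y => neg_le_neg (hM x y))
  have h2 : (fun x => ⨆ y, f x y) = fun x => -(⨅ y, -f x y) := by
    funext x
    have bddb : BddBelow (Set.range fun y => -f x y) :=
      ⟨-M, by rintro _ ⟨y, rfl⟩; exact neg_le_neg (hM x y)⟩
    have bdda : BddAbove (Set.range fun y => f x y) :=
      ⟨M, by rintro _ ⟨y, rfl⟩; exact hM x y⟩
    apply le_antisymm
    · refine ciSup_le fun y => ?_
      rw [le_neg]
      exact ciInf_le bddb y
    · rw [neg_le]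
      exact le_ciInf fun y => neg_le_neg (le_ciSup bdda y)
  rw [h2]
  exact h1.neg

end aux

theorem stmt6 {P Q R : Type*} [MetricSpace P] [MetricSpace Q] [MetricSpace R]
    [CompactSpace P] [CompactSpace Q] [CompactSpace R]
    [Nonempty P] [Nonempty Q] [Nonempty R]
    (φ : P → Q → R → ℝ)
    (hφ : Continuous fun x : P × Q × R => φ x.1 x.2.1 x.2.2)
    (Pn : ℕ → Set P) (Qn : ℕ → Set Q) (Rn : ℕ → Set R)
    (hPne : ∀ n, (Pn n).Nonempty) (hQne : ∀ n, (Qn n).Nonempty)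
    (hRne : ∀ n, (Rn n).Nonempty)
    (hPd : ∀ n, Dense (Pn n)) (hQd : ∀ n, Dense (Qn n)) (hRd : ∀ n, Dense (Rn n)) :
    Filter.Tendsto
      (fun n => ⨅ p : Pn n, ⨆ q : Qn n, ⨅ r : Rn n, φ p q r)
      Filter.atTop
      (nhds (⨅ p : P, ⨆ q : Q, ⨅ r : R, φ p q r)) := by
  -- Global bounds on φ
  obtain ⟨zm, -, hzm⟩ := isCompact_univ.exists_isMinOn (Set.univ_nonempty (α := P × Q × R))
    hφ.continuousOn
  obtain ⟨zM, -, hzM⟩ := isCompact_univ.exists_isMaxOn (Set.univ_nonempty (α := P × Q × R))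
    hφ.continuousOn
  set m : ℝ := φ zm.1 zm.2.1 zm.2.2 with hm_def
  set M : ℝ := φ zM.1 zM.2.1 zM.2.2 with hM_def
  have hm : ∀ p q r, m ≤ φ p q r := fun p q r => hzm (Set.mem_univ (p, q, r))
  have hM : ∀ p q r, φ p q r ≤ M := fun p q r => hzM (Set.mem_univ (p, q, r))
  -- continuity of the inner infimum h(p,q) = ⨅ r, φ p q r on P × Q
  have hcont_h : Continuous fun pq : P × Q => ⨅ r : R, φ pq.1 pq.2 r := by
    apply continuous_ciInf_compact (f := fun pq : P × Q => fun r : R => φ pq.1 pq.2 r)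
    · exact hφ.comp ((continuous_fst.fst).prodMk
        ((continuous_fst.snd).prodMk continuous_snd))
    · exact fun pq r => hm pq.1 pq.2 r
  -- bounds on h
  have hm_h : ∀ (p : P) (q : Q), m ≤ ⨅ r : R, φ p q r := fun p q =>
    le_ciInf fun r => hm p q r
  have hM_h : ∀ (p : P) (q : Q), (⨅ r : R, φ p q r) ≤ M := fun p q =>
    le_trans (ciInf_le ⟨m, by rintro _ ⟨r, rfl⟩; exact hm p q r⟩ (Classical.arbitrary R))
      (hM p q _)
  -- continuity of g p = ⨆ q, h p q
  have hcont_g : Continuous fun p : P => ⨆ q : Q, ⨅ r : R, φ p q r := by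
    apply continuous_ciSup_compact (f := fun p q => ⨅ r : R, φ p q r)
    · exact hcont_h
    · exact hM_h
  have hm_g : ∀ p : P, m ≤ ⨆ q : Q, ⨅ r : R, φ p q r := fun p =>
    le_trans (hm_h p (Classical.arbitrary Q))
      (le_ciSup ⟨M, by rintro _ ⟨q, rfl⟩; exact hM_h p q⟩ (Classical.arbitrary Q))
  have key : ∀ n, (⨅ p : Pn n, ⨆ q : Qn n, ⨅ r : Rn n, φ p q r)
      = ⨅ p : P, ⨆ q : Q, ⨅ r : R, φ p q r := by
    intro n
    have hr : ∀ (p : P) (q : Q), (⨅ r : Rn n, φ p q r) = ⨅ r : R, φ p q r := by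
      intro p q
      exact dense_ciInf_eq
        (hφ.comp (Continuous.prodMk continuous_const
          (Continuous.prodMk continuous_const continuous_id)))
        (hRd n) (hRne n) (hm p q)
    have hq : ∀ p : P, (⨆ q : Qn n, ⨅ r : R, φ p q r) = ⨆ q : Q, ⨅ r : R, φ p q r := by
      intro p
      exact dense_ciSup_eq
        (hcont_h.comp (Continuous.prodMk continuous_const continuous_id))
        (hQd n) (hQne n) (hM_h p)
    have hp : (⨅ p : Pn n, ⨆ q : Q, ⨅ r : R, φ p q r)
        = ⨅ p : P, ⨆ q : Q, ⨅ r : R, φ p q r :=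
      dense_ciInf_eq hcont_g (hPd n) (hPne n) hm_g
    calc (⨅ p : Pn n, ⨆ q : Qn n, ⨅ r : Rn n, φ p q r)
        = ⨅ p : Pn n, ⨆ q : Qn n, ⨅ r : R, φ p q r := by simp_rw [hr]
      _ = ⨅ p : Pn n, ⨆ q : Q, ⨅ r : R, φ p q r := by simp_rw [hq]
      _ = ⨅ p : P, ⨆ q : Q, ⨅ r : R, φ p q r := hp
  simp only [key]
  exact tendsto_const_nhds
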